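/- arXiv:2311.18506 — 6 statements merged into one kernel-verified Lean document; each statement's English description precedes it below -/
import Mathlib

section
/- Let y be a real random variable with distribution p·N(a,σ²) + (1−p)·N(−a,σ²), where p ∈ [0,1], a ∈ ℝ and σ > 0. Then E[ y · tanh(a y/σ²) ] = a. -/
open MeasureTheory ProbabilityTheory Real
open scoped NNReal ENNReal

lemma my_continuous_tanh : Continuous Real.tanh := by
  have h : Real.tanh = fun x => Real.sinh x / Real.cosh x :=
    funext fun x => Real.tanh_eq_sinh_div_cosh x
  rw [h]
  exact Real.continuous_sinh.div Real.continuous_cosh fun x => (Real.cosh_pos x).ne'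

lemma my_abs_tanh_le_one (x : ℝ) : |Real.tanh x| ≤ 1 := by
  rw [Real.tanh_eq_sinh_div_cosh, abs_div, abs_of_pos (Real.cosh_pos x),
    div_le_one (Real.cosh_pos x), Real.sinh_eq, Real.cosh_eq, abs_le]
  constructor <;> nlinarith [Real.exp_pos x, Real.exp_pos (-x)]

lemma my_integrable_mul_gaussianPDFReal (m : ℝ) {v : ℝ≥0} (hv : v ≠ 0) :
    Integrable (fun x => gaussianPDFReal m v x * x) := by
  have hv' : (0:ℝ) < (v:ℝ) := by
    have := pos_iff_ne_zero.mpr hv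
    exact_mod_cast this
  have hb : (0:ℝ) < (2 * (v:ℝ))⁻¹ := by positivity
  have h1 : Integrable (fun x : ℝ => (x + m) * rexp (-(2*(v:ℝ))⁻¹ * x ^ 2)) := by
    have := (integrable_mul_exp_neg_mul_sq hb).add
      ((integrable_exp_neg_mul_sq hb).const_mul m)
    refine this.congr (Filter.Eventually.of_forall fun x => ?_)
    simp only [Pi.add_apply]
    ring
  have h2 := h1.comp_sub_right m
  simp only [sub_add_cancel] at h2
  have h3 := h2.const_mul ((√(2 * π * (v:ℝ)))⁻¹)
  refine h3.congr (Filter.Eventually.of_forall fun x => ?_)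
  simp only [gaussianPDFReal]
  rw [show -(x - m)^2 / (2 * (v:ℝ)) = -(2*(v:ℝ))⁻¹ * (x - m)^2 by field_simp]
  ring

lemma my_integrable_gaussianReal (m : ℝ) {v : ℝ≥0} (hv : v ≠ 0) {g : ℝ → ℝ} :
    Integrable g (gaussianReal m v) ↔
      Integrable (fun x => gaussianPDFReal m v x * g x) volume := by
  rw [gaussianReal_of_var_ne_zero m hv, gaussianPDF_def]
  rw [show (fun x => ENNReal.ofReal (gaussianPDFReal m v x))
      = (fun x => ((gaussianPDFReal m v x).toNNReal : ℝ≥0∞)) from rfl]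
  rw [integrable_withDensity_iff_integrable_smul
      ((measurable_gaussianPDFReal m v).real_toNNReal)]
  constructor <;> intro h <;>
    refine h.congr (Filter.Eventually.of_forall fun x => ?_) <;>
    simp [NNReal.smul_def, Real.coe_toNNReal _ (gaussianPDFReal_nonneg m v x)]

lemma my_integral_gaussianReal (m : ℝ) {v : ℝ≥0} (hv : v ≠ 0) (g : ℝ → ℝ) :
    ∫ x, g x ∂(gaussianReal m v) = ∫ x, gaussianPDFReal m v x * g x := by
  rw [gaussianReal_of_var_ne_zero m hv, gaussianPDF_def]
  rw [show (fun x => ENNReal.ofReal (gaussianPDFReal m v x))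
      = (fun x => ((gaussianPDFReal m v x).toNNReal : ℝ≥0∞)) from rfl]
  rw [integral_withDensity_eq_integral_smul
      ((measurable_gaussianPDFReal m v).real_toNNReal)]
  congr 1
  ext x
  simp [NNReal.smul_def, Real.coe_toNNReal _ (gaussianPDFReal_nonneg m v x)]

lemma my_integrable_id_gaussianReal (m : ℝ) {v : ℝ≥0} (hv : v ≠ 0) :
    Integrable (fun x => x) (gaussianReal m v) :=
  (my_integrable_gaussianReal m hv).mpr (my_integrable_mul_gaussianPDFReal m hv)

lemma my_integral_id_gaussianReal (m : ℝ) {v : ℝ≥0} (hv : v ≠ 0) :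
    ∫ x, x ∂(gaussianReal m v) = m := by
  have h0 : ∫ x, x ∂(gaussianReal 0 v) = 0 := by
    have hone : (⟨(-1:ℝ)^2, sq_nonneg _⟩ : ℝ≥0) = 1 := by ext; norm_num
    have hmap : (gaussianReal 0 v).map (fun x => -1 * x) = gaussianReal 0 v := by
      rw [gaussianReal_map_const_mul, show NNReal.mk ((-1:ℝ)^2) (sq_nonneg _) = 1 from hone, one_mul, mul_zero]
    have h : ∫ x, x ∂(gaussianReal 0 v) = ∫ x, -1 * x ∂(gaussianReal 0 v) := by
      conv_lhs => rw [← hmap]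
      rw [integral_map (f := fun x : ℝ => x) (by fun_prop)
        measurable_id.aestronglyMeasurable]
    rw [integral_const_mul] at h
    linarith
  have hmap : (gaussianReal 0 v).map (· + m) = gaussianReal m v := by
    simpa using gaussianReal_map_add_const (μ := 0) (v := v) m
  rw [← hmap, integral_map (f := fun x : ℝ => x) (by fun_prop)
    measurable_id.aestronglyMeasurable]
  rw [integral_add (my_integrable_id_gaussianReal 0 hv) (integrable_const m), h0,
    integral_const]
  simp

lemma my_key_pdf (a σ : ℝ) (hσ : 0 < σ) (x : ℝ) :
    Real.tanh (a * x / σ^2) *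
        (gaussianPDFReal a ⟨σ^2, sq_nonneg σ⟩ x + gaussianPDFReal (-a) ⟨σ^2, sq_nonneg σ⟩ x)
      = gaussianPDFReal a ⟨σ^2, sq_nonneg σ⟩ x - gaussianPDFReal (-a) ⟨σ^2, sq_nonneg σ⟩ x := by
  have hσ2 : (0:ℝ) < σ^2 := by positivity
  have hc : ((⟨σ^2, sq_nonneg σ⟩ : ℝ≥0) : ℝ) = σ^2 := rfl
  simp only [gaussianPDFReal, hc]
  show Real.tanh (a * x / σ^2) * ((√(2 * π * σ^2))⁻¹ * rexp (-(x - a)^2 / (2 * σ^2))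
      + (√(2 * π * σ^2))⁻¹ * rexp (-(x - -a)^2 / (2 * σ^2)))
    = (√(2 * π * σ^2))⁻¹ * rexp (-(x - a)^2 / (2 * σ^2))
      - (√(2 * π * σ^2))⁻¹ * rexp (-(x - -a)^2 / (2 * σ^2))
  have e1 : -(x - a)^2 / (2 * σ^2)
      = (-(x^2) - a^2) / (2*σ^2) + a*x/σ^2 := by field_simp; ring
  have e2 : -(x - -a)^2 / (2 * σ^2)
      = (-(x^2) - a^2) / (2*σ^2) - a*x/σ^2 := by field_simp; ring
  rw [e1, e2, Real.exp_add, Real.exp_sub, Real.tanh_eq_sinh_div_cosh,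
    Real.sinh_eq, Real.cosh_eq, Real.exp_neg]
  have h1 := Real.exp_pos (a*x/σ^2)
  have h2 := Real.exp_pos ((-(x^2) - a^2) / (2*σ^2))
  have h3 : √(2 * π * σ^2) > 0 := by positivity
  field_simp

/-- If `y` has the mixture distribution
`p·N(a,σ²) + (1−p)·N(−a,σ²)` with `p ∈ [0,1]`, `a ∈ ℝ`, `σ > 0`, then
`E[y · tanh(a y/σ²)] = a`. -/
theorem statement7 (p : ℝ) (hp : p ∈ Set.Icc (0:ℝ) 1) (a σ : ℝ) (hσ : 0 < σ) :
    ∫ x, x * Real.tanh (a * x / σ^2)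
      ∂(ENNReal.ofReal p • gaussianReal a ⟨σ^2, sq_nonneg σ⟩
        + ENNReal.ofReal (1 - p) • gaussianReal (-a) ⟨σ^2, sq_nonneg σ⟩) = a := by
  have hσ2 : (0:ℝ) < σ^2 := by positivity
  set v : ℝ≥0 := ⟨σ^2, sq_nonneg σ⟩ with hv_def
  have hv : v ≠ 0 := by
    intro h
    have h2 : (v : ℝ) = σ^2 := rfl
    rw [h] at h2
    simp at h2
    nlinarith
  set f : ℝ → ℝ := fun x => x * Real.tanh (a * x / σ^2) with hf
  have hfm : Measurable f := by
    apply Measurable.mul measurable_id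
    exact my_continuous_tanh.measurable.comp (by fun_prop)
  have hint : ∀ m : ℝ, Integrable f (gaussianReal m v) := by
    intro m
    have h := (my_integrable_id_gaussianReal m hv).bdd_mul
      ((my_continuous_tanh.measurable.comp
        (show Measurable fun x : ℝ => a * x / σ^2 by fun_prop)).aestronglyMeasurable)
      (Filter.Eventually.of_forall fun x => my_abs_tanh_le_one _)
    exact h.congr (Filter.Eventually.of_forall fun x => mul_comm _ _)
  -- the two component integrals are equal
  have hone : (⟨(-1:ℝ)^2, sq_nonneg _⟩ : ℝ≥0) = 1 := by ext; norm_num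
  have hmapneg : (gaussianReal a v).map (fun x => -1 * x) = gaussianReal (-a) v := by
    rw [gaussianReal_map_const_mul, show NNReal.mk ((-1:ℝ)^2) (sq_nonneg _) = 1 from hone, one_mul, neg_one_mul]
  have hB : ∫ x, f x ∂(gaussianReal (-a) v) = ∫ x, f x ∂(gaussianReal a v) := by
    rw [← hmapneg, integral_map (by fun_prop) hfm.aestronglyMeasurable]
    congr 1
    ext x
    simp [hf, mul_neg, neg_mul, neg_div, Real.tanh_neg]
  -- volume-level integrability
  have volInt : ∀ m : ℝ, Integrable (fun x => gaussianPDFReal m v x * f x) volume :=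
    fun m => (my_integrable_gaussianReal m hv).mp (hint m)
  have hC : ∫ x, f x ∂(gaussianReal a v) + ∫ x, f x ∂(gaussianReal (-a) v) = 2 * a := by
    rw [my_integral_gaussianReal a hv f, my_integral_gaussianReal (-a) hv f,
      ← integral_add (volInt a) (volInt (-a))]
    have heq : (fun x => gaussianPDFReal a v x * f x + gaussianPDFReal (-a) v x * f x)
        = fun x => gaussianPDFReal a v x * x - gaussianPDFReal (-a) v x * x := by
      ext x
      have hk := my_key_pdf a σ hσ x
      simp only [hf]
      linear_combination x * hk
    rw [heq, integral_sub (my_integrable_mul_gaussianPDFReal a hv)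
      (my_integrable_mul_gaussianPDFReal (-a) hv),
      ← my_integral_gaussianReal a hv (fun x => x),
      ← my_integral_gaussianReal (-a) hv (fun x => x),
      my_integral_id_gaussianReal a hv, my_integral_id_gaussianReal (-a) hv]
    ring
  have hIa : ∫ x, f x ∂(gaussianReal a v) = a := by linarith [hB, hC]
  rw [integral_add_measure ((hint a).smul_measure ENNReal.ofReal_ne_top)
      ((hint (-a)).smul_measure ENNReal.ofReal_ne_top),
    integral_smul_measure, integral_smul_measure,
    ENNReal.toReal_ofReal hp.1, ENNReal.toReal_ofReal (by linarith [hp.2])]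
  rw [show (∫ x, x * Real.tanh (a * x / σ^2) ∂(gaussianReal a v)) = a from hIa,
    show (∫ x, x * Real.tanh (a * x / σ^2) ∂(gaussianReal (-a) v))
      = a from hB.trans hIa]
  simp only [smul_eq_mul]
  ring
end

section
/- Let y be a real Gaussian random variable with mean a and variance σ² > 0, and let â ∈ ℝ satisfy a·â ≥ 0. Then E[ (â y/σ²) · tanh′(â y/σ²) ] ≥ 0, where tanh′ is the derivative of tanh. -/
/-!
Write `f y = (â y/σ²) · tanh′(â y/σ²)`. Since `tanh′ = 1/cosh²` is even, `f` is odd, so pairing `y`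
with `-y` turns the expectation into `½ ∫ (p(y) - p(-y)) f(y) dy`, where `p` is the density of
`N(a, σ²)`. The factor `p(y) - p(-y)` has the sign of `a y`, the factor `f(y)` that of `â y`, so
their product has the sign of `a â y² ≥ 0`.
-/

open MeasureTheory ProbabilityTheory NNReal

namespace Real

theorem hasDerivAt_tanh (x : ℝ) : HasDerivAt tanh (cosh x ^ 2)⁻¹ x := by
  have h := (hasDerivAt_sinh x).div (hasDerivAt_cosh x) (cosh_pos x).ne'
  rwa [← sq, ← sq, cosh_sq_sub_sinh_sq, one_div,
    show sinh / cosh = tanh from funext fun y => (tanh_eq_sinh_div_cosh y).symm] at h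

theorem deriv_tanh : deriv tanh = fun x => (cosh x ^ 2)⁻¹ :=
  funext fun x => (hasDerivAt_tanh x).deriv

end Real

theorem integral_nonneg_of_add_comp_neg_nonneg {G : Type*} [MeasurableSpace G] [AddGroup G]
    [MeasurableNeg G] {μ : Measure G} [μ.IsNegInvariant] {f : G → ℝ}
    (hf : ∀ x, 0 ≤ f x + f (-x)) : 0 ≤ ∫ x, f x ∂μ := by
  by_cases hint : Integrable f μ
  · have h := integral_nonneg (μ := μ) (f := fun x => f x + f (-x)) hf
    rw [integral_add hint hint.comp_neg, integral_neg_eq_self f μ] at h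
    linarith
  · rw [integral_undef hint]

theorem gaussianPDFReal_neg_le {μ : ℝ} (v : ℝ≥0) {y : ℝ} (hy : 0 ≤ μ * y) :
    gaussianPDFReal μ v (-y) ≤ gaussianPDFReal μ v y := by
  refine mul_le_mul_of_nonneg_left (Real.exp_le_exp.2 ?_) (by positivity)
  refine div_le_div_of_nonneg_right ?_ (by positivity)
  nlinarith

theorem gaussianPDFReal_sub_neg_mul_nonneg {μ : ℝ} (v : ℝ≥0) {y c : ℝ} (hc : 0 ≤ μ * y * c) :
    0 ≤ (gaussianPDFReal μ v y - gaussianPDFReal μ v (-y)) * c := by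
  rcases lt_trichotomy c 0 with hneg | rfl | hpos
  · have hle := gaussianPDFReal_neg_le v (y := -y)
      (by linarith [nonpos_of_mul_nonneg_left hc hneg] : 0 ≤ μ * -y)
    rw [neg_neg] at hle
    exact mul_nonneg_of_nonpos_of_nonpos (sub_nonpos.2 hle) hneg.le
  · simp
  · exact mul_nonneg (sub_nonneg.2 (gaussianPDFReal_neg_le v (nonneg_of_mul_nonneg_left hc hpos)))
      hpos.le

theorem integral_gaussianReal_nonneg_of_odd {μ : ℝ} {v : ℝ≥0} {f : ℝ → ℝ}
    (hodd : ∀ x, f (-x) = -f x) (hf : ∀ x, 0 ≤ μ * x * f x) :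
    0 ≤ ∫ x, f x ∂gaussianReal μ v := by
  rcases eq_or_ne v 0 with rfl | hv
  · rw [gaussianReal_zero_var, integral_dirac]
    rcases eq_or_ne μ 0 with rfl | hμ
    · have h0 := hodd 0
      rw [neg_zero] at h0
      linarith
    · exact nonneg_of_mul_nonneg_right (hf μ) (mul_self_pos.2 hμ)
  rw [integral_gaussianReal_eq_integral_smul hv]
  refine integral_nonneg_of_add_comp_neg_nonneg fun y => ?_
  have hpair : gaussianPDFReal μ v y • f y + gaussianPDFReal μ v (-y) • f (-y)
      = (gaussianPDFReal μ v y - gaussianPDFReal μ v (-y)) * f y := by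
    rw [hodd, smul_eq_mul, smul_eq_mul]; ring
  rw [hpair]
  exact gaussianPDFReal_sub_neg_mul_nonneg v (hf y)

theorem statement8_general (a ahat σ : ℝ) (h : 0 ≤ a * ahat) :
    0 ≤ ∫ y, (ahat * y / σ^2) * deriv Real.tanh (ahat * y / σ^2)
      ∂(gaussianReal a ⟨σ^2, sq_nonneg σ⟩) := by
  simp only [Real.deriv_tanh]
  refine integral_gaussianReal_nonneg_of_odd (fun y => ?_) (fun y => ?_)
  · rw [show ahat * -y / σ ^ 2 = -(ahat * y / σ ^ 2) by ring, Real.cosh_neg]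
    ring
  · have hsign : a * y * (ahat * y / σ ^ 2 * (Real.cosh (ahat * y / σ ^ 2) ^ 2)⁻¹)
        = a * ahat * (y ^ 2 / σ ^ 2 * (Real.cosh (ahat * y / σ ^ 2) ^ 2)⁻¹) := by ring
    rw [hsign]
    exact mul_nonneg h (by positivity)

/-- If `y ~ N(a, σ²)` with `σ > 0` and `â ∈ ℝ` satisfies `a·â ≥ 0`,
then `E[(â y/σ²) · tanh′(â y/σ²)] ≥ 0`, where `tanh′` is the derivative of `tanh`. -/
theorem statement8 (a ahat σ : ℝ) (hσ : 0 < σ) (h : 0 ≤ a * ahat) :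
    0 ≤ ∫ y, (ahat * y / σ^2) * deriv Real.tanh (ahat * y / σ^2)
      ∂(gaussianReal a ⟨σ^2, sq_nonneg σ⟩) :=
  statement8_general a ahat σ h
end

section
/- Let y be a real Gaussian random variable with mean a and variance σ² > 0, and let â ∈ ℝ satisfy a·â ≥ 0. Then E[ tanh(â y/σ²) ] ≥ 1 − exp( −|a|·min(|a|,|â|)/(2σ²) ). -/
open MeasureTheory ProbabilityTheory Real Set NNReal ENNReal

namespace Stmt9

lemma tanh_ge (t : ℝ) : 1 - Real.exp (-t) ≤ Real.tanh t := by
  rw [Real.tanh_eq_sinh_div_cosh, le_div_iff₀ (Real.cosh_pos t)]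
  nlinarith [Real.cosh_sub_sinh t, Real.one_le_cosh t, (Real.exp_pos (-t)).le,
    mul_nonneg (Real.exp_pos (-t)).le (sub_nonneg.2 (Real.one_le_cosh t))]

lemma abs_tanh_le (t : ℝ) : |Real.tanh t| ≤ 1 := by
  rw [Real.tanh_eq_sinh_div_cosh, abs_div, abs_of_pos (Real.cosh_pos t),
    div_le_one (Real.cosh_pos t), abs_le]
  constructor <;> nlinarith [Real.sinh_lt_cosh t, Real.cosh_add_sinh t, Real.exp_pos t]

lemma tanh_mono {x y : ℝ} (h : x ≤ y) : Real.tanh x ≤ Real.tanh y := by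
  rw [Real.tanh_eq_sinh_div_cosh, Real.tanh_eq_sinh_div_cosh,
    div_le_div_iff₀ (Real.cosh_pos x) (Real.cosh_pos y)]
  have h1 : Real.sinh (x - y) ≤ 0 := by
    rw [← Real.sinh_zero]
    exact Real.sinh_le_sinh.2 (by linarith)
  rw [Real.sinh_sub] at h1
  linarith

lemma continuous_tanh : Continuous Real.tanh := by
  have : Real.tanh = fun x => Real.sinh x / Real.cosh x := funext Real.tanh_eq_sinh_div_cosh
  rw [this]
  exact Real.continuous_sinh.div Real.continuous_cosh fun x => (Real.cosh_pos x).ne'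

lemma integral_gaussianReal_eq {a : ℝ} {v : ℝ≥0} (hv : v ≠ 0) (g : ℝ → ℝ) :
    ∫ x, g x ∂(gaussianReal a v) = ∫ x, gaussianPDFReal a v x * g x := by
  rw [gaussianReal_of_var_ne_zero _ hv]
  have h1 : gaussianPDF a v = fun x => ((Real.toNNReal (gaussianPDFReal a v x) : ℝ≥0) : ℝ≥0∞) :=
    rfl
  rw [h1, integral_withDensity_eq_integral_smul (measurable_gaussianPDFReal a v).real_toNNReal]
  congr 1
  funext x
  rw [NNReal.smul_def, smul_eq_mul, Real.coe_toNNReal _ (gaussianPDFReal_nonneg a v x)]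

lemma pdf_ge {a : ℝ} {v : ℝ≥0} (hv : v ≠ 0) (ha : 0 ≤ a) {x : ℝ} (hx : 0 ≤ x) :
    gaussianPDFReal a v (-x) ≤ gaussianPDFReal a v x := by
  have hv' : 0 < (v : ℝ) := by positivity
  simp only [gaussianPDFReal]
  apply mul_le_mul_of_nonneg_left _ (by positivity)
  apply Real.exp_le_exp.2
  apply div_le_div_of_nonneg_right ?_ (by positivity)
  nlinarith

lemma integral_odd_nonneg {a : ℝ} {v : ℝ≥0} (hv : v ≠ 0) (ha : 0 ≤ a)
    (h : ℝ → ℝ) (hcont : Continuous h) (hodd : ∀ x, h (-x) = -h x)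
    (hpos : ∀ x, 0 ≤ x → 0 ≤ h x) (C : ℝ) (hbdd : ∀ x, |h x| ≤ C) :
    0 ≤ ∫ x, h x ∂(gaussianReal a v) := by
  rw [integral_gaussianReal_eq hv]
  set f : ℝ → ℝ := fun x => gaussianPDFReal a v x * h x with hf
  have hmeas : AEStronglyMeasurable f volume :=
    ((measurable_gaussianPDFReal a v).mul hcont.measurable).aestronglyMeasurable
  have hint : Integrable f := by
    refine Integrable.mono' ((integrable_gaussianPDFReal a v).const_mul C) hmeas
      (ae_of_all _ fun x => ?_)
    have h0 := gaussianPDFReal_nonneg a v x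
    calc ‖f x‖ = gaussianPDFReal a v x * |h x| := by
          simp [hf, abs_mul, abs_of_nonneg h0]
      _ ≤ gaussianPDFReal a v x * C := mul_le_mul_of_nonneg_left (hbdd x) h0
      _ = C * gaussianPDFReal a v x := mul_comm _ _
  have hintneg : Integrable (fun x => f (-x)) := hint.comp_neg
  have hsplit : ∫ x, f x = (∫ x in Iic 0, f x) + ∫ x in Ioi 0, f x :=
    (intervalIntegral.integral_Iic_add_Ioi hint.integrableOn hint.integrableOn).symm
  have hneg : (∫ x in Iic 0, f x) = ∫ x in Ioi 0, f (-x) := by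
    rw [integral_comp_neg_Ioi, neg_zero]
  rw [hsplit, hneg, ← integral_add hintneg.integrableOn hint.integrableOn]
  apply setIntegral_nonneg measurableSet_Ioi
  intro x hx
  have hx0 : (0:ℝ) ≤ x := le_of_lt hx
  have heq : f (-x) + f x = (gaussianPDFReal a v x - gaussianPDFReal a v (-x)) * h x := by
    simp only [hf, hodd x]
    ring
  rw [heq]
  exact mul_nonneg (sub_nonneg.2 (pdf_ge hv ha hx0)) (hpos x hx0)

lemma pdf_mul_exp {a : ℝ} {v : ℝ≥0} (hv : v ≠ 0) (c x : ℝ) :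
    gaussianPDFReal a v x * Real.exp (-(c * x)) =
      Real.exp (c ^ 2 * v / 2 - c * a) * gaussianPDFReal (a - c * v) v x := by
  have hv' : 0 < (v : ℝ) := by positivity
  simp only [gaussianPDFReal]
  have hexp : -(x - a) ^ 2 / (2 * (v:ℝ)) + -(c * x)
      = (c ^ 2 * v / 2 - c * a) + (-(x - (a - c * (v:ℝ))) ^ 2 / (2 * (v:ℝ))) := by
    field_simp
    ring
  rw [mul_assoc, ← Real.exp_add, hexp, Real.exp_add]
  ring

lemma integral_pdf_exp {a : ℝ} {v : ℝ≥0} (hv : v ≠ 0) (c : ℝ) :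
    ∫ x, gaussianPDFReal a v x * Real.exp (-(c * x)) = Real.exp (c ^ 2 * v / 2 - c * a) := by
  simp_rw [pdf_mul_exp hv]
  rw [integral_const_mul _ _, integral_gaussianPDFReal_eq_one _ hv, mul_one]

lemma integrable_pdf_exp {a : ℝ} {v : ℝ≥0} (hv : v ≠ 0) (c : ℝ) :
    Integrable (fun x => gaussianPDFReal a v x * Real.exp (-(c * x))) := by
  simp_rw [pdf_mul_exp hv]
  exact (integrable_gaussianPDFReal _ _).const_mul _

lemma main {a ahat σ : ℝ} (hσ : 0 < σ) (ha : 0 ≤ a) (hahat : 0 ≤ ahat) :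
    1 - Real.exp (-(a * min a ahat) / (2 * σ^2))
      ≤ ∫ y, Real.tanh (ahat * y / σ^2) ∂(gaussianReal a ⟨σ^2, sq_nonneg σ⟩) := by
  set v : ℝ≥0 := ⟨σ^2, sq_nonneg σ⟩ with hvdef
  have hvc : (v : ℝ) = σ^2 := rfl
  have hσ2 : (0:ℝ) < σ^2 := by positivity
  have hv : v ≠ 0 := by
    intro h0
    rw [← NNReal.coe_eq_zero] at h0  -- name check
    rw [hvc] at h0
    exact hσ2.ne' h0
  set b := min a ahat with hb
  have hb0 : 0 ≤ b := le_min ha hahat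
  have hba : b ≤ a := min_le_left _ _
  have hbh : b ≤ ahat := min_le_right _ _
  have int_tanh : ∀ c : ℝ, Integrable (fun y => Real.tanh (c * y / σ^2)) (gaussianReal a v) := by
    intro c
    refine Integrable.mono' (integrable_const 1)
      ((continuous_tanh.comp (by continuity)).aestronglyMeasurable)
      (ae_of_all _ fun x => ?_)
    simpa using abs_tanh_le (c * x / σ^2)
  -- step 1 : monotonicity in the coefficient
  have step1 : (∫ y, Real.tanh (b * y / σ^2) ∂(gaussianReal a v))
      ≤ ∫ y, Real.tanh (ahat * y / σ^2) ∂(gaussianReal a v) := by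
    have hodd : 0 ≤ ∫ y, (Real.tanh (ahat * y / σ^2) - Real.tanh (b * y / σ^2))
        ∂(gaussianReal a v) := by
      refine integral_odd_nonneg hv ha _
        ((continuous_tanh.comp (by continuity)).sub (continuous_tanh.comp (by continuity)))
        (fun x => ?_) (fun x hx => ?_) 2 (fun x => ?_)
      · rw [show ahat * -x / σ^2 = -(ahat * x / σ^2) by ring,
          show b * -x / σ^2 = -(b * x / σ^2) by ring, Real.tanh_neg, Real.tanh_neg]
        ring
      · refine sub_nonneg.2 (tanh_mono ?_)
        apply div_le_div_of_nonneg_right (mul_le_mul_of_nonneg_right hbh hx) hσ2.le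
      · have h1 := abs_le.1 (abs_tanh_le (ahat * x / σ^2))
        have h2 := abs_le.1 (abs_tanh_le (b * x / σ^2))
        rw [abs_le]
        constructor <;> [linarith [h1.1, h2.2]; linarith [h1.2, h2.1]]
    rw [integral_sub (int_tanh ahat) (int_tanh b)] at hodd
    linarith
  -- step 2 : lower bound via exponential
  have step2 : 1 - Real.exp ((b / σ^2) ^ 2 * v / 2 - (b / σ^2) * a)
      ≤ ∫ y, Real.tanh (b * y / σ^2) ∂(gaussianReal a v) := by
    rw [integral_gaussianReal_eq hv]
    have hint2 : Integrable (fun x => gaussianPDFReal a v x * Real.tanh (b * x / σ^2)) := by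
      refine Integrable.mono' (integrable_gaussianPDFReal a v)
        ((measurable_gaussianPDFReal a v).mul
          (continuous_tanh.comp (by continuity)).measurable).aestronglyMeasurable
        (ae_of_all _ fun x => ?_)
      have h0 := gaussianPDFReal_nonneg a v x
      calc ‖gaussianPDFReal a v x * Real.tanh (b * x / σ^2)‖
          = gaussianPDFReal a v x * |Real.tanh (b * x / σ^2)| := by
            simp [abs_mul, abs_of_nonneg h0]
        _ ≤ gaussianPDFReal a v x * 1 := mul_le_mul_of_nonneg_left (abs_tanh_le _) h0
        _ = gaussianPDFReal a v x := mul_one _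
    have hint1 : Integrable
        (fun x => gaussianPDFReal a v x * (1 - Real.exp (-((b / σ^2) * x)))) := by
      simp_rw [mul_sub, mul_one]
      exact (integrable_gaussianPDFReal a v).sub (integrable_pdf_exp hv _)
    have hle : ∀ x, gaussianPDFReal a v x * (1 - Real.exp (-((b / σ^2) * x)))
        ≤ gaussianPDFReal a v x * Real.tanh (b * x / σ^2) := by
      intro x
      refine mul_le_mul_of_nonneg_left ?_ (gaussianPDFReal_nonneg a v x)
      rw [show (b / σ^2) * x = b * x / σ^2 by ring]
      exact tanh_ge _
    have hmono := integral_mono hint1 hint2 hle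
    have hcomp : ∫ x, gaussianPDFReal a v x * (1 - Real.exp (-((b / σ^2) * x)))
        = 1 - Real.exp ((b / σ^2) ^ 2 * v / 2 - (b / σ^2) * a) := by
      simp_rw [mul_sub, mul_one]
      rw [integral_sub (integrable_gaussianPDFReal a v) (integrable_pdf_exp hv _),
        integral_gaussianPDFReal_eq_one _ hv, integral_pdf_exp hv]
    rw [hcomp] at hmono
    exact hmono
  -- combine
  have hE : (b / σ^2) ^ 2 * (v:ℝ) / 2 - (b / σ^2) * a ≤ -(a * b) / (2 * σ^2) := by
    rw [hvc]
    have heq : (b / σ^2) ^ 2 * σ^2 / 2 - (b / σ^2) * a = (b^2 - 2*a*b) / (2 * σ^2) := by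
      field_simp
    rw [heq]
    apply div_le_div_of_nonneg_right ?_ (by positivity)  -- wrong lemma direction? numerator mono
    nlinarith [mul_le_mul_of_nonneg_right hba hb0]
  have := Real.exp_le_exp.2 hE
  linarith [step1, step2]

lemma transfer {a ahat σ : ℝ} (hσ : 0 < σ) :
    ∫ y, Real.tanh (ahat * y / σ^2) ∂(gaussianReal a ⟨σ^2, sq_nonneg σ⟩)
      = ∫ y, Real.tanh ((-ahat) * y / σ^2) ∂(gaussianReal (-a) ⟨σ^2, sq_nonneg σ⟩) := by
  have hone : (⟨(-1:ℝ)^2, sq_nonneg _⟩ : ℝ≥0) = 1 := by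
    ext
    norm_num
  have hmap : Measure.map (fun x => (-1:ℝ) * x) (gaussianReal a ⟨σ^2, sq_nonneg σ⟩)
      = gaussianReal (-a) ⟨σ^2, sq_nonneg σ⟩ := by
    have := gaussianReal_map_const_mul (μ := a) (v := ⟨σ^2, sq_nonneg σ⟩) (-1 : ℝ)
    rw [show NNReal.mk ((-1:ℝ)^2) (sq_nonneg _) * ⟨σ^2, sq_nonneg σ⟩ = ⟨σ^2, sq_nonneg σ⟩ by
      rw [show NNReal.mk ((-1:ℝ)^2) (sq_nonneg _) = 1 from hone]; exact one_mul _] at this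
    simpa using this
  have hmeas : AEStronglyMeasurable (fun y : ℝ => Real.tanh (-ahat * y / σ^2))
      (Measure.map (fun x => (-1:ℝ) * x) (gaussianReal a ⟨σ^2, sq_nonneg σ⟩)) :=
    (continuous_tanh.comp (by continuity) :
      Continuous fun y : ℝ => Real.tanh (-ahat * y / σ^2)).aestronglyMeasurable
  rw [← hmap, integral_map (by fun_prop) hmeas]
  congr 1
  funext x
  rw [show -ahat * ((-1:ℝ) * x) / σ^2 = ahat * x / σ^2 by ring]

end Stmt9

open Stmt9 in
/-- If `y ~ N(a, σ²)` with `σ > 0` and `â ∈ ℝ` satisfies `a·â ≥ 0`,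
then `E[tanh(â y/σ²)] ≥ 1 − exp(−|a|·min(|a|,|â|)/(2σ²))`. -/
theorem statement9 (a ahat σ : ℝ) (hσ : 0 < σ) (h : 0 ≤ a * ahat) :
    1 - Real.exp (-(|a| * min |a| |ahat|) / (2 * σ^2))
      ≤ ∫ y, Real.tanh (ahat * y / σ^2) ∂(gaussianReal a ⟨σ^2, sq_nonneg σ⟩) := by
  have cpos : ∀ a' ahat' : ℝ, 0 ≤ a' → 0 ≤ ahat' →
      1 - Real.exp (-(|a'| * min |a'| |ahat'|) / (2 * σ^2))
        ≤ ∫ y, Real.tanh (ahat' * y / σ^2) ∂(gaussianReal a' ⟨σ^2, sq_nonneg σ⟩) := by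
    intro a' ahat' ha' hh'
    have := main hσ ha' hh'
    rwa [abs_of_nonneg ha', abs_of_nonneg hh']
  have cneg : ∀ a' ahat' : ℝ, a' ≤ 0 → ahat' ≤ 0 →
      1 - Real.exp (-(|a'| * min |a'| |ahat'|) / (2 * σ^2))
        ≤ ∫ y, Real.tanh (ahat' * y / σ^2) ∂(gaussianReal a' ⟨σ^2, sq_nonneg σ⟩) := by
    intro a' ahat' ha' hh'
    rw [transfer hσ, abs_of_nonpos ha', abs_of_nonpos hh']
    have := main hσ (neg_nonneg.2 ha') (neg_nonneg.2 hh')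
    exact this
  rcases le_total 0 a with ha | ha
  · rcases le_total 0 ahat with hh | hh
    · exact cpos a ahat ha hh
    · have h0 : a * ahat = 0 := le_antisymm (mul_nonpos_iff.2 (Or.inl ⟨ha, hh⟩)) h
      rcases mul_eq_zero.1 h0 with h1 | h1
      · exact cneg a ahat (le_of_eq h1) hh
      · exact cpos a ahat ha (ge_of_eq h1)
  · rcases le_total ahat 0 with hh | hh
    · exact cneg a ahat ha hh
    · have h0 : a * ahat = 0 := le_antisymm (mul_nonpos_iff.2 (Or.inr ⟨ha, hh⟩)) h
      rcases mul_eq_zero.1 h0 with h1 | h1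
      · exact cpos a ahat (ge_of_eq h1) hh
      · exact cneg a ahat ha (le_of_eq h1)
end

section
/- Fix σ > 0. For c > 0, define F(c,x) = ∫_{−∞}^{∞} f(c,x,w) exp(−w²/(2σ²)) dw, where f(c,x,w) = (w+x) tanh(c(w+x)/σ²) + (w−x) tanh(c(w−x)/σ²). Then for every fixed c > 0, the function x ↦ F(c,x) is (strictly) increasing on x > 0. -/
/-!
Write `g(u) = u tanh(cu/σ²)` and `K(w) = exp(-w²/(2σ²))`: both are even, `g` increases and `K`
decreases in `|·|`, and the integral equals `2 I(x)` with `I(x) = ∫ g(w + x) K(w) dw`.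
For `x₁ = m - d < x₂ = m + d` with `m, d > 0`, shifting by `m` and reflecting gives
`2 (I(x₂) - I(x₁)) = ∫ (g(r + d) - g(r - d)) (K(r - m) - K(r + m)) dr`.
Both factors have the sign of `r`, so the integrand is nonnegative, and it is positive at `r = m`.
-/

open MeasureTheory Real Set

@[fun_prop]
theorem Real.continuous_tanh : Continuous tanh := by
  simp_rw [funext tanh_eq_sinh_div_cosh]
  exact continuous_sinh.div continuous_cosh fun x => (cosh_pos x).ne'

theorem Real.tanh_strictMono : StrictMono tanh := by
  intro x y hxy
  by_contra! hle
  have := artanh_le_artanh (neg_one_lt_tanh y) (tanh_lt_one x) hle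
  rw [artanh_tanh, artanh_tanh] at this
  linarith

theorem Real.tanh_nonneg {x : ℝ} (hx : 0 ≤ x) : 0 ≤ tanh x :=
  tanh_zero ▸ tanh_strictMono.monotone hx

namespace Function.Even

variable {β : Type*} {f : ℝ → β} {s t : ℝ}

theorem apply_abs (hf : f.Even) (x : ℝ) : f |x| = f x := by
  rcases abs_choice x with h | h <;> rw [h]
  exact hf x

theorem apply_le_apply_of_abs_le [Preorder β] (hf : f.Even) (hmono : MonotoneOn f (Ici 0))
    (h : |s| ≤ |t|) : f s ≤ f t := by
  rw [← hf.apply_abs s, ← hf.apply_abs t]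
  exact hmono (abs_nonneg s) (abs_nonneg t) h

theorem apply_lt_apply_of_abs_lt [Preorder β] (hf : f.Even) (hmono : StrictMonoOn f (Ici 0))
    (h : |s| < |t|) : f s < f t := by
  rw [← hf.apply_abs s, ← hf.apply_abs t]
  exact hmono (abs_nonneg s) (abs_nonneg t) h

end Function.Even

section EvenCorrelation

variable {g K : ℝ → ℝ}

theorem integral_comp_sub_mul_eq_of_even (hg : g.Even) (hK : K.Even) (x : ℝ) :
    ∫ w, g (w - x) * K w = ∫ w, g (w + x) * K w := by
  rw [← integral_neg_eq_self]
  congr 1 with w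
  rw [← hK w, ← hg (w + x)]
  ring_nf

theorem sub_mul_sub_eq_of_even (hg : g.Even) (hK : K.Even) (m d r : ℝ) :
    (g (r + d) - g (r - d)) * (K (r - m) - K (r + m)) =
      (g (r - m + (m + d)) * K (r - m) - g (r - m + (m - d)) * K (r - m)) +
        (g (-m - r + (m + d)) * K (-m - r) - g (-m - r + (m - d)) * K (-m - r)) := by
  have e₁ : -m - r + (m + d) = -(r - d) := by ring
  have e₂ : -m - r + (m - d) = -(r + d) := by ring
  have e₃ : -m - r = -(r + m) := by ring
  rw [e₁, e₂, e₃, hg, hg, hK]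
  ring_nf

theorem sub_mul_sub_nonneg_of_even (hg : g.Even) (hK : K.Even) (hg_mono : MonotoneOn g (Ici 0))
    (hK_anti : AntitoneOn K (Ici 0)) {m d : ℝ} (hm : 0 ≤ m) (hd : 0 ≤ d) (r : ℝ) :
    0 ≤ (g (r + d) - g (r - d)) * (K (r - m) - K (r + m)) := by
  have hK_dual := hK.left_comp OrderDual.toDual
  have hK_mono : MonotoneOn (OrderDual.toDual ∘ K) (Ici 0) := hK_anti.dual_right
  rcases le_total 0 r with hr | hr
  · refine mul_nonneg (sub_nonneg.2 ?_) (sub_nonneg.2 ?_)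
    · exact hg.apply_le_apply_of_abs_le hg_mono (sq_le_sq.1 (by nlinarith))
    · exact hK_dual.apply_le_apply_of_abs_le hK_mono (sq_le_sq.1 (by nlinarith))
  · refine mul_nonneg_of_nonpos_of_nonpos (sub_nonpos.2 ?_) (sub_nonpos.2 ?_)
    · exact hg.apply_le_apply_of_abs_le hg_mono (sq_le_sq.1 (by nlinarith))
    · exact hK_dual.apply_le_apply_of_abs_le hK_mono (sq_le_sq.1 (by nlinarith))

theorem strictMonoOn_integral_comp_add_mul_of_even (hg : g.Even) (hK : K.Even)
    (hg_mono : StrictMonoOn g (Ici 0)) (hK_anti : StrictAntiOn K (Ici 0))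
    (hg_cont : Continuous g) (hK_cont : Continuous K)
    (hint : ∀ x, Integrable fun w => g (w + x) * K w) :
    StrictMonoOn (fun x => ∫ w, g (w + x) * K w) (Ici 0) := by
  intro x₁ hx₁ x₂ _ hlt
  obtain ⟨m, d, rfl, rfl, hm, hd⟩ : ∃ m d, x₁ = m - d ∧ x₂ = m + d ∧ 0 < m ∧ 0 < d :=
    ⟨(x₁ + x₂) / 2, (x₂ - x₁) / 2, by ring, by ring, by linarith [mem_Ici.1 hx₁], by linarith⟩
  set D : ℝ → ℝ := fun w => g (w + (m + d)) * K w - g (w + (m - d)) * K w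
  set ψ : ℝ → ℝ := fun r => (g (r + d) - g (r - d)) * (K (r - m) - K (r + m))
  have hD : Integrable D := (hint _).sub (hint _)
  have hψ : ψ = fun r => D (r - m) + D (-m - r) := funext (sub_mul_sub_eq_of_even hg hK m d)
  have hψ_int : Integrable ψ := hψ ▸ (hD.comp_sub_right m).add (hD.comp_sub_left (-m))
  have hψ_integral : ∫ r, ψ r = 2 * ∫ w, D w := by
    rw [hψ, integral_add (hD.comp_sub_right m) (hD.comp_sub_left (-m)),
      integral_sub_right_eq_self, integral_sub_left_eq_self]
    ring
  have hψ_nonneg : 0 ≤ ψ := sub_mul_sub_nonneg_of_even hg hK hg_mono.monotoneOn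
    hK_anti.antitoneOn hm.le hd.le
  have hψ_pos : ψ m ≠ 0 := by
    refine (mul_pos (sub_pos.2 ?_) (sub_pos.2 ?_)).ne'
    · exact hg.apply_lt_apply_of_abs_lt hg_mono (sq_lt_sq.1 (by nlinarith))
    · exact (hK.left_comp OrderDual.toDual).apply_lt_apply_of_abs_lt hK_anti.dual_right
        (sq_lt_sq.1 (by nlinarith))
  have hψ_cont : Continuous ψ := by fun_prop
  have hpos := integral_pos_of_integrable_nonneg_nonzero hψ_cont hψ_int hψ_nonneg hψ_pos
  rw [hψ_integral, integral_sub (hint _) (hint _)] at hpos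
  simp only
  linarith

end EvenCorrelation

section TanhGaussian

variable {a b : ℝ}

theorem even_mul_tanh_mul (a : ℝ) : Function.Even fun u => u * tanh (a * u) := by
  intro u
  simp only [mul_neg, tanh_neg, neg_mul, neg_neg]

theorem strictMonoOn_mul_tanh_mul (ha : 0 < a) :
    StrictMonoOn (fun u => u * tanh (a * u)) (Ici 0) := by
  intro s hs t _ hst
  exact mul_lt_mul'' hst (tanh_strictMono (by gcongr)) hs (tanh_nonneg (mul_nonneg ha.le hs))

theorem even_exp_neg_mul_sq (b : ℝ) : Function.Even fun w => exp (-b * w ^ 2) := by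
  intro w
  simp only [even_two, Even.neg_pow]

theorem strictAntiOn_exp_neg_mul_sq (hb : 0 < b) :
    StrictAntiOn (fun w => exp (-b * w ^ 2)) (Ici 0) := by
  intro s hs t _ hst
  simp only [exp_lt_exp, neg_mul, neg_lt_neg_iff]
  gcongr

theorem integrable_mul_tanh_mul_exp_neg_mul_sq (a : ℝ) (hb : 0 < b) (x : ℝ) :
    Integrable fun w => (w + x) * tanh (a * (w + x)) * exp (-b * w ^ 2) := by
  have hpoly : Integrable fun w => (w + x) * exp (-b * w ^ 2) := by
    simp_rw [add_mul]
    exact (integrable_mul_exp_neg_mul_sq hb).add ((integrable_exp_neg_mul_sq hb).const_mul x)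
  have hbdd := hpoly.bdd_mul (c := 1)
    (continuous_tanh.comp (by fun_prop : Continuous fun w => a * (w + x))).aestronglyMeasurable
    (Filter.Eventually.of_forall fun w => (abs_tanh_lt_one _).le)
  refine hbdd.congr (Filter.Eventually.of_forall fun w => ?_)
  simp only [Function.comp]
  ring

end TanhGaussian

/-- Fix `σ > 0`.  For `c > 0` let
`F(c,x) = ∫ f(c,x,w) exp(−w²/(2σ²)) dw` with
`f(c,x,w) = (w+x) tanh(c(w+x)/σ²) + (w−x) tanh(c(w−x)/σ²)`.
Then for every fixed `c > 0`, `x ↦ F(c,x)` is strictly increasing on `x > 0`. -/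
theorem statement10 (σ : ℝ) (hσ : 0 < σ) (c : ℝ) (hc : 0 < c) :
    StrictMonoOn (fun x : ℝ => ∫ w : ℝ,
      ((w + x) * Real.tanh (c * (w + x) / σ^2)
        + (w - x) * Real.tanh (c * (w - x) / σ^2)) * Real.exp (-w^2 / (2 * σ^2)))
      (Set.Ioi 0) := by
  set g : ℝ → ℝ := fun u => u * tanh (c / σ ^ 2 * u)
  set K : ℝ → ℝ := fun w => exp (-(1 / (2 * σ ^ 2)) * w ^ 2)
  have hb : 0 < 1 / (2 * σ ^ 2) := by positivity
  have hint (x : ℝ) : Integrable fun w => g (w + x) * K w :=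
    integrable_mul_tanh_mul_exp_neg_mul_sq _ hb x
  have hI := strictMonoOn_integral_comp_add_mul_of_even (even_mul_tanh_mul _)
    (even_exp_neg_mul_sq _) (strictMonoOn_mul_tanh_mul (by positivity))
    (strictAntiOn_exp_neg_mul_sq hb) (by fun_prop) (by fun_prop) hint
  refine ((strictMono_mul_left_of_pos two_pos).comp_strictMonoOn
    (hI.mono Ioi_subset_Ici_self)).congr fun x _ => ?_
  have hint_sub : Integrable fun w => g (w - x) * K w := by
    simpa only [sub_eq_add_neg] using hint (-x)
  dsimp only [Function.comp]
  rw [two_mul]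
  nth_rw 2 [← integral_comp_sub_mul_eq_of_even (even_mul_tanh_mul _) (even_exp_neg_mul_sq _)]
  rw [← integral_add (hint x) hint_sub]
  congr 1 with w
  simp only [g, K]
  ring_nf
end

section
/- Fix σ > 0. For all c > 0 and x > 0, ∫_{−∞}^{∞} [ (c(w+x)/σ²) tanh′(c(w+x)/σ²) − (c(w−x)/σ²) tanh′(c(w−x)/σ²) ] exp(−w²/(2σ²)) dw > 0, where tanh′ is the derivative of tanh. -/
open MeasureTheory
open Real

lemma tanh_hasDerivAt (y : ℝ) : HasDerivAt Real.tanh (1 / Real.cosh y ^ 2) y := by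
  have h : HasDerivAt (fun x => Real.sinh x / Real.cosh x)
      ((Real.cosh y * Real.cosh y - Real.sinh y * Real.sinh y) / Real.cosh y ^ 2) y :=
    (Real.hasDerivAt_sinh y).div (Real.hasDerivAt_cosh y) (ne_of_gt (Real.cosh_pos y))
  have e : (Real.cosh y * Real.cosh y - Real.sinh y * Real.sinh y) = 1 := by
    have := Real.cosh_sq_sub_sinh_sq y; nlinarith [this]
  rw [e] at h
  exact h.congr_of_eventuallyEq (by filter_upwards with x using (Real.tanh_eq_sinh_div_cosh x))

lemma deriv_tanh' (y : ℝ) : deriv Real.tanh y = 1 / Real.cosh y ^ 2 :=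
  (tanh_hasDerivAt y).deriv

lemma sq_le_sinh_sq (u : ℝ) : u^2 ≤ Real.sinh u ^ 2 := by
  rcases lt_trichotomy u 0 with h | h | h
  · have h1 : Real.sinh u < u := by
      have := Real.self_lt_sinh_iff (x := -u) |>.mpr (by linarith)
      simpa [Real.sinh_neg] using this
    nlinarith
  · simp [h]
  · have h1 : u < Real.sinh u := Real.self_lt_sinh_iff.mpr h
    nlinarith

lemma cosh_sq_ge (u : ℝ) : 1 + u^2 ≤ Real.cosh u ^ 2 := by
  have := Real.cosh_sq u
  have := sq_le_sinh_sq u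
  linarith

lemma fbound (u : ℝ) : ‖u * (1 / Real.cosh u ^ 2)‖ ≤ 1 := by
  have hc : (0:ℝ) < Real.cosh u ^ 2 := by positivity
  have h1 : 1 + u^2 ≤ Real.cosh u ^ 2 := cosh_sq_ge u
  rw [Real.norm_eq_abs, abs_mul, abs_of_pos (by positivity : (0:ℝ) < 1 / Real.cosh u ^2)]
  have : |u| ≤ 1 + u^2 := by nlinarith [abs_nonneg u, sq_abs u]
  calc |u| * (1 / Real.cosh u ^ 2) ≤ (1 + u^2) * (1/Real.cosh u^2) := by
        apply mul_le_mul_of_nonneg_right this (by positivity)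
    _ ≤ Real.cosh u ^2 * (1/Real.cosh u^2) := by
        apply mul_le_mul_of_nonneg_right h1 (by positivity)
    _ = 1 := by field_simp

/-- Fix `σ > 0`.  For all `c > 0` and `x > 0`,
`∫ [(c(w+x)/σ²) tanh′(c(w+x)/σ²) − (c(w−x)/σ²) tanh′(c(w−x)/σ²)] exp(−w²/(2σ²)) dw > 0`,
where `tanh′` is the derivative of `tanh`. -/
theorem statement12 (σ : ℝ) (hσ : 0 < σ) :
    ∀ c > (0:ℝ), ∀ x > (0:ℝ),
      0 < ∫ w : ℝ,
        ((c * (w + x) / σ^2) * deriv Real.tanh (c * (w + x) / σ^2)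
          - (c * (w - x) / σ^2) * deriv Real.tanh (c * (w - x) / σ^2))
          * Real.exp (-w^2 / (2 * σ^2)) := by
  intro c hc x hx
  have hσ2 : (0:ℝ) < σ^2 := by positivity
  set a : ℝ := c / σ^2 with ha
  have ha0 : 0 < a := div_pos hc hσ2
  set f : ℝ → ℝ := fun u => u * (1 / Real.cosh u ^ 2) with hf
  have hfcont : Continuous f := by
    apply continuous_id.mul
    exact continuous_const.div (Real.continuous_cosh.pow 2)
      (fun u => by positivity)
  have hfpos : ∀ u : ℝ, 0 < u → 0 < f u := fun u hu => by
    simp only [hf]; positivity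
  have hfneg : ∀ u : ℝ, u < 0 → f u < 0 := fun u hu => by
    simp only [hf]
    apply mul_neg_of_neg_of_pos hu (by positivity)
  -- generic integrability
  have hint : ∀ b : ℝ, Integrable (fun u : ℝ => f (a*u) * Real.exp (-(u-b)^2/(2*σ^2))) := by
    intro b
    have h0 : Integrable (fun u : ℝ => Real.exp (-(1/(2*σ^2)) * u^2)) :=
      integrable_exp_neg_mul_sq (by positivity)
    have h1 : Integrable (fun u : ℝ => Real.exp (-(1/(2*σ^2)) * (u - b)^2)) := by
      simpa using h0.comp_sub_right b
    have h2 : Integrable (fun u : ℝ => Real.exp (-(u-b)^2/(2*σ^2))) := by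
      apply h1.congr
      filter_upwards with u
      congr 1; ring
    exact h2.bdd_mul ((hfcont.comp (continuous_const.mul continuous_id)).aestronglyMeasurable)
      (c := 1) (Filter.Eventually.of_forall fun u => fbound (a*u))
  -- the symmetrized integrand
  set H : ℝ → ℝ := fun u => f (a*u) *
      (Real.exp (-(u-x)^2/(2*σ^2)) - Real.exp (-(u+x)^2/(2*σ^2))) with hH
  have hintH : Integrable H := by
    have h2 : Integrable (fun u : ℝ => f (a*u) * Real.exp (-(u+x)^2/(2*σ^2))) := by
      apply (hint (-x)).congr
      filter_upwards with u
      congr 2; ring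
    have := (hint x).sub h2
    apply this.congr
    filter_upwards with u
    simp only [Pi.sub_apply, hH]; ring
  have hHnonneg : 0 ≤ H := by
    intro u
    rcases lt_trichotomy u 0 with h | h | h
    · have h1 : f (a*u) < 0 := hfneg _ (mul_neg_of_pos_of_neg ha0 h)
      have h2 : Real.exp (-(u-x)^2/(2*σ^2)) < Real.exp (-(u+x)^2/(2*σ^2)) := by
        apply Real.exp_lt_exp.mpr
        rw [div_lt_div_iff_of_pos_right (by positivity)]
        nlinarith
      simp only [hH]
      exact le_of_lt (mul_pos_of_neg_of_neg h1 (by linarith))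
    · simp [hH, h, hf]
    · have h1 : 0 < f (a*u) := hfpos _ (by positivity)
      have h2 : Real.exp (-(u+x)^2/(2*σ^2)) < Real.exp (-(u-x)^2/(2*σ^2)) := by
        apply Real.exp_lt_exp.mpr
        rw [div_lt_div_iff_of_pos_right (by positivity)]
        nlinarith
      simp only [hH]
      exact le_of_lt (mul_pos h1 (by linarith))
  have hHpos : ∀ u : ℝ, 0 < u → 0 < H u := by
    intro u h
    have h1 : 0 < f (a*u) := hfpos _ (by positivity)
    have h2 : Real.exp (-(u+x)^2/(2*σ^2)) < Real.exp (-(u-x)^2/(2*σ^2)) := by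
      apply Real.exp_lt_exp.mpr
      rw [div_lt_div_iff_of_pos_right (by positivity)]
      nlinarith
    simp only [hH]
    exact mul_pos h1 (by linarith)
  -- positivity of ∫ H
  have hkey : 0 < ∫ u : ℝ, H u := by
    rw [integral_pos_iff_support_of_nonneg hHnonneg hintH]
    have hsub : Set.Ioi (0:ℝ) ⊆ Function.support H :=
      fun u hu => ne_of_gt (hHpos u hu)
    calc (0:ENNReal) < volume (Set.Ioi (0:ℝ)) := by simp [Real.volume_Ioi]
      _ ≤ volume (Function.support H) := measure_mono hsub
  -- rewrite original integrand
  have hrw : ∀ w : ℝ,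
      ((c * (w + x) / σ^2) * deriv Real.tanh (c * (w + x) / σ^2)
        - (c * (w - x) / σ^2) * deriv Real.tanh (c * (w - x) / σ^2))
        * Real.exp (-w^2 / (2 * σ^2))
      = f (a*(w+x)) * Real.exp (-(w+x-x)^2/(2*σ^2))
        - f (a*(w-x)) * Real.exp (-(w-x+x)^2/(2*σ^2)) := by
    intro w
    have e1 : c * (w + x) / σ^2 = a * (w + x) := by rw [ha]; ring
    have e2 : c * (w - x) / σ^2 = a * (w - x) := by rw [ha]; ring
    rw [e1, e2, deriv_tanh', deriv_tanh']
    simp only [hf]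
    ring
  simp only [hrw]
  -- translation invariance
  have hG1 : Integrable (fun w : ℝ => f (a*(w+x)) * Real.exp (-(w+x-x)^2/(2*σ^2))) :=
    (hint x).comp_add_right x
  have hG2 : Integrable (fun w : ℝ => f (a*(w-x)) * Real.exp (-(w-x+x)^2/(2*σ^2))) := by
    have h2 : Integrable (fun u : ℝ => f (a*u) * Real.exp (-(u+x)^2/(2*σ^2))) := by
      apply (hint (-x)).congr
      filter_upwards with u
      congr 2; ring
    simpa using h2.comp_sub_right x
  rw [integral_sub hG1 hG2]
  have hI1 : (∫ w : ℝ, f (a*(w+x)) * Real.exp (-(w+x-x)^2/(2*σ^2)))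
      = ∫ u : ℝ, f (a*u) * Real.exp (-(u-x)^2/(2*σ^2)) :=
    integral_add_right_eq_self (fun u => f (a*u) * Real.exp (-(u-x)^2/(2*σ^2))) x
  have hI2 : (∫ w : ℝ, f (a*(w-x)) * Real.exp (-(w-x+x)^2/(2*σ^2)))
      = ∫ u : ℝ, f (a*u) * Real.exp (-(u+x)^2/(2*σ^2)) :=
    integral_sub_right_eq_self (fun u => f (a*u) * Real.exp (-(u+x)^2/(2*σ^2))) x
  rw [hI1, hI2]
  have h2 : Integrable (fun u : ℝ => f (a*u) * Real.exp (-(u+x)^2/(2*σ^2))) := by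
    apply (hint (-x)).congr
    filter_upwards with u
    congr 2; ring
  rw [← integral_sub (hint x) h2]
  have : ∀ u : ℝ, f (a*u) * Real.exp (-(u-x)^2/(2*σ^2))
      - f (a*u) * Real.exp (-(u+x)^2/(2*σ^2)) = H u := by
    intro u; simp only [hH]; ring
  simp only [this]
  exact hkey
end

section
/- For every real z, |tanh(z) + z·tanh′(z)| ≤ 1.2, where tanh′ is the derivative of tanh. -/
private lemma deriv_tanh_eq (z : ℝ) : deriv Real.tanh z = 1 / Real.cosh z ^ 2 := by
  have h : HasDerivAt Real.tanh
      ((Real.cosh z * Real.cosh z - Real.sinh z * Real.sinh z) / Real.cosh z ^ 2) z := by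
    have htanh : Real.tanh = fun y => Real.sinh y / Real.cosh y :=
      funext fun y => Real.tanh_eq_sinh_div_cosh y
    rw [htanh]
    exact (Real.hasDerivAt_sinh z).div (Real.hasDerivAt_cosh z) (Real.cosh_pos z).ne'
  have h2 : Real.cosh z * Real.cosh z - Real.sinh z * Real.sinh z = 1 := by
    have := Real.cosh_sq_sub_sinh_sq z
    nlinarith [this]
  rw [h.deriv, h2]

private lemma exp_le_inv11 : Real.exp (-2.4) ≤ 1 / 11 := by
  have h8 : Real.exp (2.4) = Real.exp 0.3 ^ (8 : ℕ) := by
    rw [← Real.exp_nat_mul]; norm_num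
  have h1 : (1.3498375 : ℝ) ≤ Real.exp 0.3 := by
    have := Real.sum_le_exp_of_nonneg (x := 0.3) (by norm_num) 5
    rw [Finset.sum_range_succ, Finset.sum_range_succ, Finset.sum_range_succ,
      Finset.sum_range_succ, Finset.sum_range_succ] at this
    norm_num [Nat.factorial] at this
    linarith
  have h11 : (11 : ℝ) ≤ Real.exp (2.4) := by
    rw [h8]
    calc (11 : ℝ) ≤ (1.3498375 : ℝ) ^ (8 : ℕ) := by norm_num
    _ ≤ Real.exp 0.3 ^ (8 : ℕ) := by
        apply pow_le_pow_left₀ (by norm_num) h1 _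
  rw [show (-2.4 : ℝ) = -(2.4) by norm_num, Real.exp_neg]
  rw [div_eq_inv_mul, mul_one]
  exact inv_anti₀ (by norm_num) h11

private lemma key_upper (z : ℝ) (hz : 0 ≤ z) :
    Real.tanh z + z * (1 / Real.cosh z ^ 2) ≤ 1.2 := by
  set b : ℝ := Real.exp (-z) with hb
  have hbpos : 0 < b := Real.exp_pos _
  have hab : Real.exp z * b = 1 := by
    rw [hb, ← Real.exp_add]; simp
  have hcosh : Real.cosh z = (Real.exp z + b) / 2 := Real.cosh_eq z
  have hsinh : Real.sinh z = (Real.exp z - b) / 2 := Real.sinh_eq z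
  have hcpos : 0 < Real.cosh z := Real.cosh_pos z
  have hb2 : b ^ 2 = Real.exp (-2 * z) := by
    rw [hb, ← Real.exp_nat_mul]; ring_nf
  -- key exponential inequality: (2z - 2.4 + 1) ≤ exp (2z - 2.4)
  have hkey : (2 * z - 2.4 + 1) * Real.exp (-2 * z) ≤ Real.exp (-2.4) := by
    have h1 : (2 * z - 2.4) + 1 ≤ Real.exp (2 * z - 2.4) := Real.add_one_le_exp _
    have h2 : (0 : ℝ) < Real.exp (-2 * z) := Real.exp_pos _
    have h3 : ((2 * z - 2.4) + 1) * Real.exp (-2 * z)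
        ≤ Real.exp (2 * z - 2.4) * Real.exp (-2 * z) :=
      mul_le_mul_of_nonneg_right h1 h2.le
    calc (2 * z - 2.4 + 1) * Real.exp (-2 * z)
        ≤ Real.exp (2 * z - 2.4) * Real.exp (-2 * z) := h3
      _ = Real.exp (-2.4) := by rw [← Real.exp_add]; ring_nf
  have hkey' : (2 * z - 1.4) * b ^ 2 ≤ Real.exp (-2.4) := by
    rw [hb2]; linarith [hkey]
  have h11 : Real.exp (-2.4) ≤ 1 / 11 := exp_le_inv11
  -- reduce the goal: multiply through by cosh² and then by b²
  rw [Real.tanh_eq_sinh_div_cosh]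
  have heq : Real.sinh z / Real.cosh z + z * (1 / Real.cosh z ^ 2)
      = (Real.sinh z * Real.cosh z + z) / Real.cosh z ^ 2 := by
    field_simp
  have ha : Real.exp z = b⁻¹ := by
    field_simp
    linarith [hab]
  rw [heq, div_le_iff₀ (by positivity), hsinh, hcosh, ha]
  have hsq : (0 : ℝ) ≤ (b ^ 2 - 1 / 11) ^ 2 := sq_nonneg _
  have hbne : b ≠ 0 := ne_of_gt hbpos
  have e1 : (b⁻¹ - b) / 2 * ((b⁻¹ + b) / 2) + z = (1 - b ^ 4 + 4 * z * b ^ 2) / (4 * b ^ 2) := by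
    field_simp
    ring
  have e2 : 1.2 * ((b⁻¹ + b) / 2) ^ 2 = (1.2 * (1 + b ^ 2) ^ 2) / (4 * b ^ 2) := by
    field_simp
    ring
  rw [e1, e2, div_le_div_iff₀ (by positivity) (by positivity)]
  have hnum : 1 - b ^ 4 + 4 * z * b ^ 2 ≤ 1.2 * (1 + b ^ 2) ^ 2 := by
    nlinarith [hkey', h11, hsq]
  exact mul_le_mul_of_nonneg_right hnum (by positivity)

private lemma key_lower (z : ℝ) (hz : 0 ≤ z) :
    0 ≤ Real.tanh z + z * (1 / Real.cosh z ^ 2) := by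
  have h1 : 0 ≤ Real.tanh z := by
    rw [Real.tanh_eq_sinh_div_cosh]
    exact div_nonneg (Real.sinh_nonneg_iff.2 hz) (Real.cosh_pos z).le
  have h2 : 0 ≤ z * (1 / Real.cosh z ^ 2) := by positivity
  linarith

/-- For every real `z`, `|tanh(z) + z·tanh′(z)| ≤ 1.2`,
where `tanh′` is the derivative of `tanh`. -/
theorem statement17 (z : ℝ) :
    |Real.tanh z + z * deriv Real.tanh z| ≤ 1.2 := by
  rw [deriv_tanh_eq]
  rcases le_or_gt 0 z with hz | hz
  · rw [abs_le]
    exact ⟨by linarith [key_lower z hz], key_upper z hz⟩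
  · have hz' : 0 ≤ -z := by linarith
    have hU := key_upper (-z) hz'
    have hL := key_lower (-z) hz'
    rw [Real.tanh_neg, Real.cosh_neg] at hU hL
    rw [abs_le]
    constructor <;> nlinarith [hU, hL]
end
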